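/- Let A be a t-locally GCD integral domain. Then every nonzero t-finite t-ideal of A is t-locally t-principal. -/

import Mathlib

open scoped nonZeroDivisors

section TOperation

variable (D : Type*) [CommRing D] [IsDomain D]
  (F : Type*) [Field F] [Algebra D F] [IsFractionRing D F]

/-- The `v`-operation on fractional ideals of `D`: `I^v = (D : (D : I))`. -/
noncomputable def vOp (I : FractionalIdeal D⁰ F) : FractionalIdeal D⁰ F :=
  1 / (1 / I)

/-- The `t`-operation (as a set): `N^t = ⋃ {J^v : J ⊆ N, J a finitely generated
fractional ideal}`. -/
noncomputable def tSet (N : Submodule D F) : Set F :=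
  ⋃ J ∈ {J : FractionalIdeal D⁰ F | (J : Submodule D F) ≤ N ∧ (J : Submodule D F).FG},
    (vOp D F J : Set F)

/-- The image of an integral ideal of `D` in `F`, as a `D`-submodule of `F`. -/
def idlSub (I : Ideal D) : Submodule D F :=
  ((I : FractionalIdeal D⁰ F) : Submodule D F)

/-- A (nonzero) ideal `I` of `D` is a `t`-ideal if `I^t = I`. -/
def IsTIdeal (I : Ideal D) : Prop :=
  I ≠ 0 ∧ tSet D F (idlSub D F I) = (idlSub D F I : Set F)

/-- A (nonzero) ideal `I` of `D` is `t`-finite if `J^t = I^t` for some finitely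
generated (nonzero) ideal `J`. -/
def IsTFinite (I : Ideal D) : Prop :=
  I ≠ 0 ∧ ∃ J : Ideal D, J ≠ 0 ∧ J.FG ∧ tSet D F (idlSub D F J) = tSet D F (idlSub D F I)

/-- An ideal of `D` is `t`-maximal if it is maximal among proper `t`-ideals. -/
def IsTMaximal (M : Ideal D) : Prop :=
  M ≠ ⊤ ∧ IsTIdeal D F M ∧ ∀ J : Ideal D, J ≠ ⊤ → IsTIdeal D F J → M ≤ J → J = M

/-- `D` has the `t`-finite character if every nonzero element of `D` lies in only
finitely many `t`-maximal ideals. -/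
def HasTFiniteCharacter : Prop :=
  ∀ a : D, a ≠ 0 → {M : Ideal D | IsTMaximal D F M ∧ a ∈ M}.Finite

/-- A (nonzero) ideal `I` of `D` is `t`-invertible if `(I·I⁻¹)^t = D`, where
`I⁻¹ = (D : I)`. -/
def IsTInvertible (I : Ideal D) : Prop :=
  I ≠ 0 ∧ tSet D F
      (((I : FractionalIdeal D⁰ F) * (1 / (I : FractionalIdeal D⁰ F)) :
        FractionalIdeal D⁰ F) : Submodule D F) =
    (((1 : FractionalIdeal D⁰ F) : Submodule D F) : Set F)

/-- `D` is `v`-coherent: for every nonzero finitely generated ideal `I`,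
`I⁻¹ = J^v` for some finitely generated (nonzero) fractional ideal `J`. -/
def IsVCoherent : Prop :=
  ∀ I : Ideal D, I ≠ 0 → I.FG →
    ∃ J : FractionalIdeal D⁰ F, J ≠ 0 ∧ (J : Submodule D F).FG ∧
      1 / (I : FractionalIdeal D⁰ F) = vOp D F J

/-- `D` is a PvMD if every nonzero finitely generated ideal of `D` is `t`-invertible. -/
def IsPvMD : Prop :=
  ∀ I : Ideal D, I ≠ 0 → I.FG → IsTInvertible D F I

/-- `D` is a GCD domain: any two elements have a greatest common divisor. -/
def IsGCDDomain (D : Type*) [CommRing D] [IsDomain D] : Prop :=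
  ∀ a b : D, ∃ d : D, d ∣ a ∧ d ∣ b ∧ ∀ c : D, c ∣ a → c ∣ b → c ∣ d

end TOperation

section Local

attribute [-instance] instAlgebraAtPrimeFractionRing

variable (A : Type*) [CommRing A] [IsDomain A]
  (K : Type*) [Field K] [Algebra A K] [IsFractionRing A K]

/-- A nonzero ideal `I` of `A` is `t`-locally `t`-finite if `IA_M` is `t_M`-finite for
every `t`-maximal (prime) ideal `M` of `A`. -/
def TLocallyTFinite (I : Ideal A) : Prop :=
  ∀ (M : Ideal A) [M.IsPrime], IsTMaximal A K M →
    IsTFinite (Localization.AtPrime M) (FractionRing (Localization.AtPrime M))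
      (I.map (algebraMap A (Localization.AtPrime M)))

/-- A nonzero ideal `I` of `A` is `t`-locally principal if `IA_M` is a principal ideal
of `A_M` for every `t`-maximal (prime) ideal `M` of `A`. -/
def TLocallyPrincipal (I : Ideal A) : Prop :=
  ∀ (M : Ideal A) [M.IsPrime], IsTMaximal A K M →
    (I.map (algebraMap A (Localization.AtPrime M))).IsPrincipal

/-- A nonzero ideal `I` of `A` is `t`-locally `t`-principal if `(IA_M)^{t_M}` is
principal for every `t`-maximal (prime) ideal `M` of `A`. -/
def TLocallyTPrincipal (I : Ideal A) : Prop :=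
  ∀ (M : Ideal A) [M.IsPrime], IsTMaximal A K M →
    ∃ x : Localization.AtPrime M,
      tSet (Localization.AtPrime M) (FractionRing (Localization.AtPrime M))
          (idlSub (Localization.AtPrime M) (FractionRing (Localization.AtPrime M))
            (I.map (algebraMap A (Localization.AtPrime M)))) =
        ((idlSub (Localization.AtPrime M) (FractionRing (Localization.AtPrime M))
            (Ideal.span {x})) : Set (FractionRing (Localization.AtPrime M)))

/-- A nonzero ideal `I` of `A` is `t`-locally `t`-invertible if `IA_M` is
`t_M`-invertible for every `t`-maximal (prime) ideal `M` of `A`. -/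
def TLocallyTInvertible (I : Ideal A) : Prop :=
  ∀ (M : Ideal A) [M.IsPrime], IsTMaximal A K M →
    IsTInvertible (Localization.AtPrime M) (FractionRing (Localization.AtPrime M))
      (I.map (algebraMap A (Localization.AtPrime M)))

/-- `A` is `t`-locally `v`-coherent if `A_M` is `v`-coherent for every `t`-maximal
(prime) ideal `M` of `A`. -/
def TLocallyVCoherent : Prop :=
  ∀ (M : Ideal A) [M.IsPrime], IsTMaximal A K M →
    IsVCoherent (Localization.AtPrime M) (FractionRing (Localization.AtPrime M))

/-- `A` is `t`-locally GCD if `A_M` is a GCD domain for every `t`-maximal (prime)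
ideal `M` of `A`. -/
def TLocallyGCD : Prop :=
  ∀ (M : Ideal A) [M.IsPrime], IsTMaximal A K M → IsGCDDomain (Localization.AtPrime M)

/-- `A` is a `t`-locally PvMD if `A_M` is a PvMD for every `t`-maximal (prime)
ideal `M` of `A`. -/
def TLocallyPvMD : Prop :=
  ∀ (M : Ideal A) [M.IsPrime], IsTMaximal A K M →
    IsPvMD (Localization.AtPrime M) (FractionRing (Localization.AtPrime M))

/-- `ℱ` is a `t`-comaximal collection over `a`: `a` lies in every member and
`(𝔞₁ + 𝔞₂)^t = A` for all distinct members. -/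
def IsTComaximalOver (a : A) (F : Set (Ideal A)) : Prop :=
  (∀ I ∈ F, a ∈ I) ∧ ∀ I ∈ F, ∀ J ∈ F, I ≠ J →
    tSet A K (idlSub A K (I + J)) = (((1 : FractionalIdeal A⁰ K) : Submodule A K) : Set K)

end Local

section MyAux

variable {D : Type*} [CommRing D] [IsDomain D]
  {F : Type*} [Field F] [Algebra D F] [IsFractionRing D F]

theorem myLeIff {I J : FractionalIdeal D⁰ F} : I ≤ J ↔ ∀ x ∈ I, x ∈ J :=
  ⟨fun h x hx => h hx, fun h x hx => h x hx⟩

theorem myOneDivNeZero {H : FractionalIdeal D⁰ F} (h : H ≠ 0) : 1 / H ≠ 0 := by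
  obtain ⟨a, haS, hint⟩ := H.isFractional
  have ha0 : (a : D) ≠ 0 := nonZeroDivisors.ne_zero haS
  have hmem : algebraMap D F a ∈ 1 / H := by
    rw [FractionalIdeal.mem_div_iff_of_ne_zero h]
    intro y hy
    obtain ⟨c, hc⟩ := hint y hy
    exact (FractionalIdeal.mem_one_iff _).mpr ⟨c, by rw [hc, Algebra.smul_def]⟩
  intro h0
  rw [h0, FractionalIdeal.mem_zero_iff] at hmem
  exact ha0 (IsFractionRing.injective D F (by rw [hmem, _root_.map_zero]))

theorem myDivAntitone {G H : FractionalIdeal D⁰ F} (hG : G ≠ 0) (h : G ≤ H) :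
    1 / H ≤ 1 / G := by
  have hH : H ≠ 0 := by
    intro h0
    exact hG (le_antisymm (h.trans (le_of_eq h0)) (FractionalIdeal.zero_le _))
  rw [myLeIff]
  intro x hx
  rw [FractionalIdeal.mem_div_iff_of_ne_zero hG]
  intro y hy
  exact (FractionalIdeal.mem_div_iff_of_ne_zero hH).mp hx y (h hy)

theorem myVOpZero : vOp D F 0 = 0 := by
  rw [vOp, FractionalIdeal.div_zero, FractionalIdeal.div_zero]

theorem myVOpMono {G H : FractionalIdeal D⁰ F} (hH : H ≠ 0) (h : G ≤ H) :
    vOp D F G ≤ vOp D F H := by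
  by_cases hG : G = 0
  · rw [hG, myVOpZero]; exact FractionalIdeal.zero_le _
  · exact myDivAntitone (myOneDivNeZero hH) (myDivAntitone hG h)

theorem myLeVOp {H : FractionalIdeal D⁰ F} (hH : H ≠ 0) : H ≤ vOp D F H := by
  rw [myLeIff]
  intro x hx
  rw [vOp, FractionalIdeal.mem_div_iff_of_ne_zero (myOneDivNeZero hH)]
  intro y hy
  rw [mul_comm]
  exact (FractionalIdeal.mem_div_iff_of_ne_zero hH).mp hy x hx

theorem myVOpSpanSingleton (q : F) :
    vOp D F (FractionalIdeal.spanSingleton D⁰ q) = FractionalIdeal.spanSingleton D⁰ q := by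
  rw [vOp, FractionalIdeal.one_div_spanSingleton, FractionalIdeal.one_div_spanSingleton,
    inv_inv]

theorem myMemTSet {N : Submodule D F} {x : F} :
    x ∈ tSet D F N ↔ ∃ G : FractionalIdeal D⁰ F,
      (G : Submodule D F) ≤ N ∧ (G : Submodule D F).FG ∧ x ∈ vOp D F G := by
  constructor
  · intro hx
    obtain ⟨G, hG, hxG⟩ := Set.mem_iUnion₂.mp hx
    exact ⟨G, hG.1, hG.2, hxG⟩
  · rintro ⟨G, h1, h2, h3⟩
    exact Set.mem_iUnion₂.mpr ⟨G, ⟨h1, h2⟩, h3⟩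

theorem mySubsetTSet (N : Submodule D F) : (N : Set F) ⊆ tSet D F N := by
  intro z hz
  refine myMemTSet.mpr ⟨FractionalIdeal.spanSingleton D⁰ z, ?_, ?_, ?_⟩
  · rw [FractionalIdeal.coe_spanSingleton]
    exact Submodule.span_le.mpr (Set.singleton_subset_iff.mpr hz)
  · rw [FractionalIdeal.coe_spanSingleton]
    exact Submodule.fg_span_singleton z
  · rw [myVOpSpanSingleton]
    exact FractionalIdeal.mem_spanSingleton_self _ _

theorem myTSetFG {H : FractionalIdeal D⁰ F} (hH : H ≠ 0)
    (hfg : (H : Submodule D F).FG) :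
    tSet D F (H : Submodule D F) = (vOp D F H : Set F) := by
  ext x
  constructor
  · intro hx
    obtain ⟨G, hle, -, hxG⟩ := myMemTSet.mp hx
    exact myVOpMono hH (FractionalIdeal.coe_le_coe.mp hle) hxG
  · intro hx
    exact myMemTSet.mpr ⟨H, le_rfl, hfg, hx⟩

theorem myTSetEqSpan {Ic Jc : FractionalIdeal D⁰ F} {q : F}
    (hJ0 : Jc ≠ 0) (hfg : (Jc : Submodule D F).FG) (hle : Jc ≤ Ic)
    (hIle : Ic ≤ FractionalIdeal.spanSingleton D⁰ q)
    (hv : vOp D F Jc = FractionalIdeal.spanSingleton D⁰ q) :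
    tSet D F (Ic : Submodule D F) = (FractionalIdeal.spanSingleton D⁰ q : Set F) := by
  have hq0 : FractionalIdeal.spanSingleton D⁰ q ≠ 0 := by
    intro h0
    exact hJ0 (le_antisymm ((myLeVOp hJ0).trans (le_of_eq (hv.trans h0)))
      (FractionalIdeal.zero_le _))
  ext x
  constructor
  · intro hx
    obtain ⟨G, hle', -, hxG⟩ := myMemTSet.mp hx
    have hG : vOp D F G ≤ FractionalIdeal.spanSingleton D⁰ q := by
      have := myVOpMono hq0 ((FractionalIdeal.coe_le_coe.mp hle').trans hIle)
      rwa [myVOpSpanSingleton] at this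
    exact hG hxG
  · intro hx
    exact myMemTSet.mpr ⟨Jc, FractionalIdeal.coe_le_coe.mpr hle, hfg, hv ▸ hx⟩

theorem myCoeIdealFG {J : Ideal D} (h : J.FG) :
    ((J : FractionalIdeal D⁰ F) : Submodule D F).FG := by
  rw [FractionalIdeal.coe_coeIdeal]
  exact Submodule.FG.map _ h

private theorem foldrLcmDvd {α : Type*} [CommMonoidWithZero α] [GCDMonoid α]
    (f : α → α) (b : α) :
    ∀ m : List α, (∀ x ∈ m, f x ∣ b) → (m.foldr (fun a r => lcm (f a) r) 1) ∣ b
  | [], _ => one_dvd b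
  | a :: t, h => lcm_dvd (h a (List.mem_cons_self (a := a) (l := t)))
      (foldrLcmDvd f b t fun x hx => h x (List.mem_cons_of_mem a hx))

private theorem dvdFoldrLcm {α : Type*} [CommMonoidWithZero α] [GCDMonoid α]
    (f : α → α) :
    ∀ (m : List α) (x : α), x ∈ m → f x ∣ m.foldr (fun a r => lcm (f a) r) 1
  | a :: t, x, h => by
    rcases List.mem_cons.mp h with rfl | h
    · exact dvd_lcm_left _ _
    · exact (dvdFoldrLcm f t x h).trans (dvd_lcm_right _ _)

/-- In a GCD domain, the `v`-closure of a nonzero finitely generated ideal is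
principal, generated by a nonzero element of the domain. -/
theorem myVOpPrincipal (hg : IsGCDDomain D) {J : Ideal D} (hJ0 : J ≠ 0) (hfg : J.FG) :
    ∃ x : D, x ≠ 0 ∧
      vOp D F (J : FractionalIdeal D⁰ F)
        = FractionalIdeal.spanSingleton D⁰ (algebraMap D F x) := by
  classical
  letI : GCDMonoid D := gcdMonoidOfGCD (fun a b => (hg a b).choose)
    (fun a b => (hg a b).choose_spec.1) (fun a b => (hg a b).choose_spec.2.1)
    (fun {a b c} hac hab => (hg c b).choose_spec.2.2 a hac hab)
  obtain ⟨T, hT⟩ := hfg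
  set ι := algebraMap D F with hι
  have ιinj : Function.Injective ι := IsFractionRing.injective D F
  set l : List D := T.toList.filter (fun a => a ≠ 0) with hl
  have hmeml : ∀ a : D, a ∈ l ↔ a ∈ T ∧ a ≠ 0 := by
    intro a
    rw [hl, List.mem_filter, Finset.mem_toList]
    simp
  have hlJ : ∀ a ∈ l, a ∈ J := fun a ha => by
    rw [← hT]; exact Ideal.subset_span ((hmeml a).mp ha).1
  have hlne : ∃ a, a ∈ l := by
    by_contra h
    push_neg at h
    apply hJ0
    rw [← hT, Submodule.zero_eq_bot, Ideal.span_eq_bot]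
    intro x hx
    by_contra hx0
    exact h x ((hmeml x).mpr ⟨hx, hx0⟩)
  set p := l.prod with hp
  have hp0 : p ≠ 0 := List.prod_ne_zero (fun h0 => ((hmeml 0).mp h0).2 rfl)
  obtain ⟨a₀, ha₀⟩ := hlne
  have hap : ∀ a ∈ l, p = a * (l.erase a).prod := fun a ha => (List.prod_erase ha).symm
  have hpJ : p ∈ J := by
    rw [hap a₀ ha₀]
    exact Ideal.mul_mem_right _ _ (hlJ a₀ ha₀)
  set L := l.foldr (fun a r => lcm ((l.erase a).prod) r) 1 with hLdef
  have hqL : ∀ a ∈ l, (l.erase a).prod ∣ L := fun a ha =>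
    dvdFoldrLcm (fun a => (l.erase a).prod) l a ha
  have hLp : L ∣ p := foldrLcmDvd _ p l (fun a ha => ⟨a, by rw [hap a ha]; ring⟩)
  have hL0 : L ≠ 0 := fun h => hp0 (by
    rcases hLp with ⟨c, hc⟩
    rw [hc, h, zero_mul])
  obtain ⟨x, hx⟩ := hLp
  have hx0 : x ≠ 0 := by
    rintro rfl
    rw [mul_zero] at hx
    exact hp0 hx
  have hJc0 : (J : FractionalIdeal D⁰ F) ≠ 0 := by
    rw [FractionalIdeal.coeIdeal_ne_zero]
    rwa [← Submodule.zero_eq_bot]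
  have hιp : ι p ≠ 0 := fun h => hp0 (ιinj (by rw [h, _root_.map_zero]))
  have hιL : ι L ≠ 0 := fun h => hL0 (ιinj (by rw [h, _root_.map_zero]))
  have h1J : 1 / (J : FractionalIdeal D⁰ F)
      = FractionalIdeal.spanSingleton D⁰ (ι L * (ι p)⁻¹) := by
    apply le_antisymm
    · rw [myLeIff]
      intro y hy
      rw [FractionalIdeal.mem_div_iff_of_ne_zero hJc0] at hy
      have hyp : y * ι p ∈ (1 : FractionalIdeal D⁰ F) :=
        hy _ ((FractionalIdeal.mem_coeIdeal _).mpr ⟨p, hpJ, rfl⟩)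
      obtain ⟨m, hm⟩ := (FractionalIdeal.mem_one_iff _).mp hyp
      have hLm : L ∣ m := by
        apply foldrLcmDvd
        intro a ha
        obtain ⟨c, hc⟩ := (FractionalIdeal.mem_one_iff _).mp
          (hy _ ((FractionalIdeal.mem_coeIdeal _).mpr ⟨a, hlJ a ha, rfl⟩))
        have hmac : m * a = c * p := by
          apply ιinj
          rw [_root_.map_mul, _root_.map_mul, hm, hc]
          ring
        have h1 : a * (l.erase a).prod ∣ a * m := by
          rw [← hap a ha]
          exact ⟨c, by rw [mul_comm a m, hmac]; ring⟩
        exact (mul_dvd_mul_iff_left (((hmeml a).mp ha).2)).mp h1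
      obtain ⟨e, he⟩ := hLm
      rw [FractionalIdeal.mem_spanSingleton]
      refine ⟨e, ?_⟩
      have hy' : y = ι m * (ι p)⁻¹ := (eq_mul_inv_iff_mul_eq₀ hιp).mpr hm.symm
      rw [Algebra.smul_def, hy', he, _root_.map_mul]
      ring
    · rw [myLeIff]
      intro y hy
      obtain ⟨e, he⟩ := (FractionalIdeal.mem_spanSingleton _).mp hy
      rw [FractionalIdeal.mem_div_iff_of_ne_zero hJc0]
      intro v hv
      obtain ⟨j, hjJ, rfl⟩ := (FractionalIdeal.mem_coeIdeal _).mp hv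
      rw [FractionalIdeal.mem_one_iff]
      have hjT : j ∈ Ideal.span (↑T : Set D) := by rw [hT]; exact hjJ
      clear hv hjJ
      induction hjT using Submodule.span_induction with
      | mem a haT =>
        by_cases ha0 : a = 0
        · exact ⟨0, by simp [ha0]⟩
        · have hal : a ∈ l := (hmeml a).mpr ⟨haT, ha0⟩
          obtain ⟨f, hf⟩ := hqL a hal
          refine ⟨e * f, ?_⟩
          have key : ι L * ι a = ι p * ι f := by
            rw [← _root_.map_mul, ← _root_.map_mul]
            congr 1
            rw [hf, hap a hal]
            ring
          rw [← he, Algebra.smul_def, _root_.map_mul]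
          calc ι e * ι f = ι e * ι f * (ι p * (ι p)⁻¹) := by
                rw [mul_inv_cancel₀ hιp, mul_one]
            _ = ι e * (ι p * ι f * (ι p)⁻¹) := by ring
            _ = ι e * (ι L * ι a * (ι p)⁻¹) := by rw [key]
            _ = ι e * (ι L * (ι p)⁻¹) * ι a := by ring
      | zero => exact ⟨0, by simp⟩
      | add a b ha hb iha ihb =>
        obtain ⟨c₁, h₁⟩ := iha
        obtain ⟨c₂, h₂⟩ := ihb
        exact ⟨c₁ + c₂, by rw [_root_.map_add, _root_.map_add, mul_add, h₁, h₂]⟩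
      | smul c a ha iha =>
        obtain ⟨d, hd⟩ := iha
        refine ⟨c * d, ?_⟩
        rw [smul_eq_mul, _root_.map_mul, _root_.map_mul, hd]
        ring
  refine ⟨x, hx0, ?_⟩
  rw [vOp, h1J, FractionalIdeal.one_div_spanSingleton]
  congr 1
  rw [mul_inv, inv_inv, hx, _root_.map_mul, ← mul_assoc, inv_mul_cancel₀ hιL, one_mul]

end MyAux

attribute [-instance] instAlgebraAtPrimeFractionRing

variable {A : Type*} [CommRing A] [IsDomain A]
  {K : Type*} [Field K] [Algebra A K] [IsFractionRing A K]

set_option maxHeartbeats 1600000 in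
/-- Let `A` be a `t`-locally GCD integral domain. Then every nonzero `t`-finite
`t`-ideal of `A` is `t`-locally `t`-principal. -/
theorem tLocallyTPrincipal_of_tFinite_of_tLocallyGCD
    (hgcd : TLocallyGCD A K) :
    ∀ I : Ideal A, I ≠ 0 → IsTIdeal A K I → IsTFinite A K I →
      TLocallyTPrincipal A K I := by
  intro I hI0 hTId hTFin
  obtain ⟨-, hIt⟩ := hTId
  obtain ⟨-, J, hJ0, hJfg, hJt⟩ := hTFin
  have hκinj : Function.Injective (algebraMap A K) := IsFractionRing.injective A K
  have hJc0 : (J : FractionalIdeal A⁰ K) ≠ 0 := by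
    rw [FractionalIdeal.coeIdeal_ne_zero]
    rwa [← Submodule.zero_eq_bot]
  have hKset : ((idlSub A K I : Submodule A K) : Set K)
      = (vOp A K (J : FractionalIdeal A⁰ K) : Set K) := by
    rw [← hIt, ← hJt]
    exact myTSetFG hJc0 (myCoeIdealFG hJfg)
  have hKeq : (I : FractionalIdeal A⁰ K) = vOp A K (J : FractionalIdeal A⁰ K) := by
    rw [← FractionalIdeal.coeToSet_coeToSubmodule
      (vOp A K (J : FractionalIdeal A⁰ K))] at hKset
    exact FractionalIdeal.coeToSubmodule_injective (SetLike.coe_injective hKset)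
  have hJI : J ≤ I := by
    intro j hj
    have h1 : algebraMap A K j ∈ tSet A K (idlSub A K J) := by
      apply mySubsetTSet
      exact (FractionalIdeal.mem_coeIdeal _).mpr ⟨j, hj, rfl⟩
    rw [hJt, hIt] at h1
    have h2 : algebraMap A K j ∈ (I : FractionalIdeal A⁰ K) := h1
    obtain ⟨i, hi, hij⟩ := (FractionalIdeal.mem_coeIdeal _).mp h2
    rwa [← hκinj hij]
  intro M hMprime hMmax
  have hgcdM : IsGCDDomain (Localization.AtPrime M) := hgcd M hMmax
  set ρ := algebraMap A (Localization.AtPrime M) with hρdef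
  set ρ' := algebraMap (Localization.AtPrime M) (FractionRing (Localization.AtPrime M))
    with hρ'def
  have hinj : Function.Injective ρ :=
    IsLocalization.injective _ M.primeCompl_le_nonZeroDivisors
  have hinj' : Function.Injective ρ' := IsFractionRing.injective _ _
  have hcinj : ∀ {a b : A}, ρ' (ρ a) = ρ' (ρ b) → a = b := fun h => hinj (hinj' h)
  have hJ'0 : J.map ρ ≠ 0 := by
    obtain ⟨j, hjJ, hj0⟩ : ∃ j, j ∈ J ∧ j ≠ 0 := by
      by_contra h
      push_neg at h
      apply hJ0
      rw [Submodule.zero_eq_bot, eq_bot_iff]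
      intro z hz
      rw [Submodule.mem_bot]
      exact h z hz
    intro h0
    have hmem : ρ j ∈ J.map ρ := Ideal.mem_map_of_mem _ hjJ
    rw [h0, Submodule.zero_eq_bot, Submodule.mem_bot] at hmem
    exact hj0 (hinj (by rw [hmem, _root_.map_zero]))
  have hJ'fg : (J.map ρ).FG := Ideal.FG.map hJfg _
  have hJ'I' : J.map ρ ≤ I.map ρ := Ideal.map_mono hJI
  obtain ⟨x, hx0, hvop⟩ :=
    myVOpPrincipal (F := FractionRing (Localization.AtPrime M)) hgcdM hJ'0 hJ'fg
  have hJ'c0 : ((J.map ρ : Ideal (Localization.AtPrime M))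
      : FractionalIdeal (Localization.AtPrime M)⁰
          (FractionRing (Localization.AtPrime M))) ≠ 0 := by
    rw [FractionalIdeal.coeIdeal_ne_zero]
    rwa [← Submodule.zero_eq_bot]
  obtain ⟨TA, hTA⟩ := hJfg
  have key : ((I.map ρ : Ideal (Localization.AtPrime M))
        : FractionalIdeal (Localization.AtPrime M)⁰
            (FractionRing (Localization.AtPrime M)))
      ≤ vOp (Localization.AtPrime M) (FractionRing (Localization.AtPrime M))
          ((J.map ρ : Ideal (Localization.AtPrime M))
            : FractionalIdeal (Localization.AtPrime M)⁰
                (FractionRing (Localization.AtPrime M))) := by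
    rw [myLeIff]
    intro z hz
    obtain ⟨w, hw, rfl⟩ := (FractionalIdeal.mem_coeIdeal _).mp hz
    rw [vOp, FractionalIdeal.mem_div_iff_of_ne_zero (myOneDivNeZero hJ'c0)]
    intro y hy
    rw [FractionalIdeal.mem_div_iff_of_ne_zero hJ'c0] at hy
    -- (a) express `y` as a fraction over `A`
    obtain ⟨⟨u, v⟩, huv⟩ := IsLocalization.surj (Localization.AtPrime M)⁰ y
    obtain ⟨⟨a₁, s₁⟩, hu⟩ := IsLocalization.surj M.primeCompl u
    obtain ⟨⟨a₂, s₂⟩, hv⟩ := IsLocalization.surj M.primeCompl (v : Localization.AtPrime M)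
    have hs₁0 : (s₁ : A) ≠ 0 := fun h => s₁.2 (h ▸ M.zero_mem)
    have hs₂0 : (s₂ : A) ≠ 0 := fun h => s₂.2 (h ▸ M.zero_mem)
    have hv0 : (v : Localization.AtPrime M) ≠ 0 := nonZeroDivisors.ne_zero v.2
    have hρs₂0 : ρ (s₂ : A) ≠ 0 := fun hh => hs₂0 (hinj (by rw [hh, _root_.map_zero]))
    have ha₂0 : a₂ ≠ 0 := by
      intro h
      apply mul_ne_zero hv0 hρs₂0
      rw [hv, h, _root_.map_zero]
    obtain ⟨bb, aa, hbb0, hab⟩ : ∃ bb aa : A, bb ≠ 0 ∧ y * ρ' (ρ bb) = ρ' (ρ aa) := by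
      refine ⟨a₂ * (s₁ : A), a₁ * (s₂ : A), mul_ne_zero ha₂0 hs₁0, ?_⟩
      rw [_root_.map_mul, _root_.map_mul, _root_.map_mul, _root_.map_mul]
      have h1 : ρ' (ρ a₂) = ρ' (v : Localization.AtPrime M) * ρ' (ρ (s₂ : A)) := by
        rw [← _root_.map_mul, hv]
      have h2 : ρ' (ρ a₁) = ρ' u * ρ' (ρ (s₁ : A)) := by
        rw [← _root_.map_mul, hu]
      rw [h1, h2, ← huv]
      ring
    -- (b) per-generator denominators
    have hgen : ∀ j (_ : j ∈ TA), ∃ (c : A) (s : M.primeCompl),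
        ρ' (ρ (s : A)) * (y * ρ' (ρ j)) = ρ' (ρ c) := by
      intro j hj
      have hjJ' : ρ' (ρ j) ∈ ((J.map ρ : Ideal (Localization.AtPrime M))
          : FractionalIdeal (Localization.AtPrime M)⁰
              (FractionRing (Localization.AtPrime M))) :=
        (FractionalIdeal.mem_coeIdeal _).mpr
          ⟨ρ j, Ideal.mem_map_of_mem _ (by rw [← hTA]; exact Ideal.subset_span hj), rfl⟩
      obtain ⟨uj, huj⟩ := (FractionalIdeal.mem_one_iff _).mp (hy _ hjJ')
      obtain ⟨⟨c, s⟩, hcs⟩ := IsLocalization.surj M.primeCompl uj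
      refine ⟨c, s, ?_⟩
      rw [← huj]
      calc ρ' (ρ (s : A)) * ρ' uj = ρ' (uj * ρ (s : A)) := by
            rw [← _root_.map_mul, mul_comm]
        _ = ρ' (ρ c) := by rw [hcs]
    choose cf sf hrel using hgen
    set Sel : M.primeCompl := TA.attach.prod (fun j => sf j.1 j.2) with hSeldef
    have hSdvd : ∀ (j : A) (hj : j ∈ TA), ((sf j hj : A)) ∣ (Sel : A) := by
      intro j hj
      have hcoe : ((Sel : M.primeCompl) : A)
          = TA.attach.prod (fun t => ((sf t.1 t.2 : A))) := by
        rw [hSeldef]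
        exact SubmonoidClass.coe_finset_prod _ _
      rw [hcoe]
      exact Finset.dvd_prod_of_mem _ (Finset.mem_attach _ ⟨j, hj⟩)
    -- (c) uniform denominator over all of J
    have hSall : ∀ j ∈ J, ∃ c : A, ρ' (ρ (Sel : A)) * (y * ρ' (ρ j)) = ρ' (ρ c) := by
      intro j hj
      have hjT : j ∈ Ideal.span (↑TA : Set A) := by rw [hTA]; exact hj
      clear hj
      induction hjT using Submodule.span_induction with
      | mem a ha =>
        obtain ⟨r, hr⟩ := hSdvd a ha
        refine ⟨r * cf a ha, ?_⟩
        rw [hr, _root_.map_mul, _root_.map_mul]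
        calc ρ' (ρ ((sf a ha : A))) * ρ' (ρ r) * (y * ρ' (ρ a))
            = ρ' (ρ r) * (ρ' (ρ ((sf a ha : A))) * (y * ρ' (ρ a))) := by ring
          _ = ρ' (ρ r) * ρ' (ρ (cf a ha)) := by rw [hrel a ha]
          _ = ρ' (ρ (r * cf a ha)) := by rw [_root_.map_mul, _root_.map_mul]
      | zero => exact ⟨0, by simp⟩
      | add a b ha hb iha ihb =>
        obtain ⟨c₁, h₁⟩ := iha
        obtain ⟨c₂, h₂⟩ := ihb
        refine ⟨c₁ + c₂, ?_⟩
        rw [_root_.map_add, _root_.map_add, mul_add, mul_add, h₁, h₂,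
          ← _root_.map_add, ← _root_.map_add]
      | smul r a ha iha =>
        obtain ⟨c, hc⟩ := iha
        refine ⟨r * c, ?_⟩
        rw [show ρ' (ρ (r • a)) = ρ' (ρ r) * ρ' (ρ a) from by
          rw [smul_eq_mul, _root_.map_mul, _root_.map_mul]]
        calc ρ' (ρ (Sel : A)) * (y * (ρ' (ρ r) * ρ' (ρ a)))
            = ρ' (ρ r) * (ρ' (ρ (Sel : A)) * (y * ρ' (ρ a))) := by ring
          _ = ρ' (ρ r) * ρ' (ρ c) := by rw [hc]
          _ = ρ' (ρ (r * c)) := by rw [_root_.map_mul, _root_.map_mul]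
    -- (d) the corresponding relations in A and in K
    have hA : ∀ j ∈ J, ∃ c : A, (Sel : A) * aa * j = c * bb := by
      intro j hj
      obtain ⟨c, hc⟩ := hSall j hj
      refine ⟨c, hcinj ?_⟩
      rw [_root_.map_mul ρ ((Sel : A) * aa) j, _root_.map_mul ρ' (ρ ((Sel : A) * aa)) (ρ j),
        _root_.map_mul ρ (Sel : A) aa, _root_.map_mul ρ' (ρ (Sel : A)) (ρ aa),
        _root_.map_mul ρ c bb, _root_.map_mul ρ' (ρ c) (ρ bb)]
      rw [← hab, ← hc]
      ring
    have hκbb : algebraMap A K bb ≠ 0 := fun h =>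
      hbb0 (hκinj (by rw [h, _root_.map_zero]))
    have hz1J : (algebraMap A K ((Sel : A) * aa)) * (algebraMap A K bb)⁻¹
        ∈ 1 / (J : FractionalIdeal A⁰ K) := by
      rw [FractionalIdeal.mem_div_iff_of_ne_zero hJc0]
      intro v' hv'
      obtain ⟨j, hjJ, rfl⟩ := (FractionalIdeal.mem_coeIdeal _).mp hv'
      obtain ⟨c, hc⟩ := hA j hjJ
      refine (FractionalIdeal.mem_one_iff _).mpr ⟨c, ?_⟩
      have hKrel : algebraMap A K ((Sel : A) * aa) * algebraMap A K j
          = algebraMap A K c * algebraMap A K bb := by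
        rw [← _root_.map_mul, ← _root_.map_mul]
        exact congrArg _ hc
      rw [show algebraMap A K ((Sel : A) * aa) * (algebraMap A K bb)⁻¹ * algebraMap A K j
          = algebraMap A K ((Sel : A) * aa) * algebraMap A K j * (algebraMap A K bb)⁻¹
        from by ring, hKrel, mul_assoc, mul_inv_cancel₀ hκbb, mul_one]
    -- (e) conclude the generator case over A_M
    have hSunit : IsUnit (ρ (Sel : A)) := IsLocalization.map_units (Localization.AtPrime M) Sel
    obtain ⟨t, ht⟩ := hSunit.exists_right_inv
    have hgenI : ∀ i ∈ I, ∃ dd : Localization.AtPrime M, ρ' dd = ρ' (ρ i) * y := by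
      intro i hi
      have h1 : algebraMap A K i ∈ vOp A K (J : FractionalIdeal A⁰ K) := by
        rw [← hKeq]
        exact (FractionalIdeal.mem_coeIdeal _).mpr ⟨i, hi, rfl⟩
      have h1' : algebraMap A K i ∈ 1 / (1 / (J : FractionalIdeal A⁰ K)) := h1
      obtain ⟨d, hd⟩ := (FractionalIdeal.mem_one_iff _).mp
        ((FractionalIdeal.mem_div_iff_of_ne_zero (myOneDivNeZero hJc0)).mp h1' _ hz1J)
      have hAeq : d * bb = i * ((Sel : A) * aa) := by
        apply hκinj
        rw [_root_.map_mul (algebraMap A K) d bb,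
          _root_.map_mul (algebraMap A K) i ((Sel : A) * aa), hd, mul_assoc,
          mul_assoc, inv_mul_cancel₀ hκbb, mul_one]
      have hFeq : ρ' (ρ d) * ρ' (ρ bb) = ρ' (ρ i) * (ρ' (ρ (Sel : A)) * ρ' (ρ aa)) := by
        have h0 : ρ' (ρ (d * bb)) = ρ' (ρ (i * ((Sel : A) * aa))) := by rw [hAeq]
        rw [_root_.map_mul ρ d bb, _root_.map_mul ρ' (ρ d) (ρ bb),
          _root_.map_mul ρ i ((Sel : A) * aa),
          _root_.map_mul ρ' (ρ i) (ρ ((Sel : A) * aa)),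
          _root_.map_mul ρ (Sel : A) aa,
          _root_.map_mul ρ' (ρ (Sel : A)) (ρ aa)] at h0
        exact h0
      rw [← hab] at hFeq
      have hρbb : ρ' (ρ bb) ≠ 0 := fun h =>
        hbb0 (hcinj (by rw [h, _root_.map_zero, _root_.map_zero]))
      have hFeq2 : ρ' (ρ d) = ρ' (ρ i) * ρ' (ρ (Sel : A)) * y := by
        apply mul_right_cancel₀ hρbb
        rw [hFeq]; ring
      refine ⟨t * ρ d, ?_⟩
      rw [_root_.map_mul, hFeq2]
      have htF : ρ' (ρ (Sel : A)) * ρ' t = 1 := by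
        rw [← _root_.map_mul, ht, _root_.map_one]
      calc ρ' t * (ρ' (ρ i) * ρ' (ρ (Sel : A)) * y)
          = (ρ' (ρ (Sel : A)) * ρ' t) * (ρ' (ρ i) * y) := by ring
        _ = ρ' (ρ i) * y := by rw [htF, one_mul]
    -- outer induction on w ∈ I·A_M
    have hw' : w ∈ Ideal.span (ρ '' ↑I) := hw
    clear hz hw
    refine (FractionalIdeal.mem_one_iff _).mpr ?_
    induction hw' using Submodule.span_induction with
    | mem zz hzz =>
      obtain ⟨i, hi, rfl⟩ := hzz
      exact hgenI i hi
    | zero => exact ⟨0, by simp⟩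
    | add a b ha hb iha ihb =>
      obtain ⟨d₁, h₁⟩ := iha
      obtain ⟨d₂, h₂⟩ := ihb
      refine ⟨d₁ + d₂, ?_⟩
      rw [_root_.map_add, _root_.map_add, add_mul, h₁, h₂]
    | smul c zz hzz ih =>
      obtain ⟨dd, hdd⟩ := ih
      refine ⟨c * dd, ?_⟩
      rw [smul_eq_mul, _root_.map_mul, _root_.map_mul, hdd]
      ring
  -- assemble
  refine ⟨x, ?_⟩
  have hle2 : ((I.map ρ : Ideal (Localization.AtPrime M))
        : FractionalIdeal (Localization.AtPrime M)⁰
            (FractionRing (Localization.AtPrime M)))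
      ≤ FractionalIdeal.spanSingleton (Localization.AtPrime M)⁰
          (algebraMap (Localization.AtPrime M) (FractionRing (Localization.AtPrime M)) x) := by
    rw [← hvop]; exact key
  have heq := myTSetEqSpan hJ'c0 (myCoeIdealFG hJ'fg)
    ((FractionalIdeal.coeIdeal_le_coeIdeal _).mpr hJ'I') hle2 hvop
  unfold idlSub
  rw [FractionalIdeal.coeIdeal_span_singleton, FractionalIdeal.coeToSet_coeToSubmodule]
  exact heq
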